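/- arXiv:1809.09716 — 2 statements merged into one kernel-verified Lean document; each statement's English description precedes it below -/
import Mathlib

section
/- Let $\mathbb{A} = \{x \in \mathbb{R}^{n_A} \mid H_A x \le h_A\}$ and $\mathbb{B} = \{x \in \mathbb{R}^{n_B} \mid H_B x \le h_B\}$ be polytopes with $\mathbb{B}$ nonempty, let $T \in \mathbb{R}^{n_A \times n_B}$ and $d \in \mathbb{R}^{n_A}$. Then $T\mathbb{B} + \{d\} \subseteq \mathbb{A}$ if and only if there exists a matrix $\Lambda \ge 0$ (entrywise) such that $\Lambda H_B = H_A T$ and $\Lambda h_B \le h_A - H_A d$. -/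
open Finset Matrix

lemma cone_cara {ι E : Type*} [DecidableEq ι] [AddCommGroup E] [Module ℝ E]
    (v : ι → E) (s : Finset ι) :
    ∀ l : ι → ℝ, (∀ i, 0 ≤ l i) →
      ∃ t ⊆ s, LinearIndependent ℝ (fun i : t => v i) ∧
        ∃ m : ι → ℝ, (∀ i, 0 ≤ m i) ∧ ∑ i ∈ t, m i • v i = ∑ i ∈ s, l i • v i := by
  induction s using Finset.strongInduction with
  | _ s ih =>
    intro l hl
    by_cases hind : LinearIndependent ℝ (fun i : s => v i)
    · exact ⟨s, subset_rfl, hind, l, hl, rfl⟩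
    · obtain ⟨g, hg0, i₁, hi₁⟩ := Fintype.not_linearIndependent_iff.mp hind
      have main : ∀ G : ι → ℝ, (∀ i ∉ s, G i = 0) → (∑ i ∈ s, G i • v i = 0) →
          (∃ i ∈ s, 0 < G i) →
          ∃ t ⊆ s, LinearIndependent ℝ (fun i : t => v i) ∧
            ∃ m : ι → ℝ, (∀ i, 0 ≤ m i) ∧ ∑ i ∈ t, m i • v i = ∑ i ∈ s, l i • v i := by
        rintro G hGout hGsum ⟨iw, hiws, hiw⟩
        set s' := s.filter (fun i => 0 < G i) with hs'
        have hs'ne : s'.Nonempty := ⟨iw, by simp [hs', hiws, hiw]⟩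
        obtain ⟨i₀, hi₀, hmin⟩ := s'.exists_min_image (fun i => l i / G i) hs'ne
        have hi₀s : i₀ ∈ s := (Finset.mem_filter.mp hi₀).1
        have hGi₀ : 0 < G i₀ := (Finset.mem_filter.mp hi₀).2
        set r := l i₀ / G i₀ with hr
        have hr0 : 0 ≤ r := div_nonneg (hl _) hGi₀.le
        set l' : ι → ℝ := fun i => l i - r * G i with hl'def
        have hl' : ∀ i, 0 ≤ l' i := by
          intro i
          by_cases hGi : 0 < G i
          · have his : i ∈ s := by
              by_contra hns; rw [hGout i hns] at hGi; exact lt_irrefl _ hGi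
            have h1 : r ≤ l i / G i := hmin i (Finset.mem_filter.mpr ⟨his, hGi⟩)
            have h2 := (le_div_iff₀ hGi).mp h1
            simp only [hl'def]; linarith
          · push_neg at hGi
            have : r * G i ≤ 0 := mul_nonpos_of_nonneg_of_nonpos hr0 hGi
            simp only [hl'def]; linarith [hl i]
        have hsum' : ∑ i ∈ s, l' i • v i = ∑ i ∈ s, l i • v i := by
          simp only [hl'def, sub_smul, Finset.sum_sub_distrib, mul_smul]
          rw [← Finset.smul_sum, hGsum, smul_zero, sub_zero]
        have hli₀ : l' i₀ = 0 := by
          simp only [hl'def, hr]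
          field_simp
          ring
        obtain ⟨t, hts, hind', m, hm, hmsum⟩ :=
          ih (s.erase i₀) (Finset.erase_ssubset hi₀s) l' hl'
        refine ⟨t, hts.trans (Finset.erase_subset _ _), hind', m, hm, ?_⟩
        rw [hmsum, Finset.sum_erase s (by rw [hli₀, zero_smul]), hsum']
      set G : ι → ℝ := fun i => if h : i ∈ s then g ⟨i, h⟩ else 0 with hG
      have hGsum : ∑ i ∈ s, G i • v i = 0 := by
        rw [← Finset.sum_attach s (fun i => G i • v i), ← hg0]
        exact Finset.sum_congr rfl fun x _ => by simp [hG, x.2]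
      have hGout : ∀ i ∉ s, G i = 0 := fun i hi => by simp [hG, hi]
      have hGi₁ : G (i₁ : ι) = g i₁ := by simp [hG, i₁.2]
      rcases hi₁.lt_or_gt with hneg | hpos
      · refine main (-G) (fun i hi => by simp [hGout i hi]) ?_ ⟨i₁, i₁.2, ?_⟩
        · simp only [Pi.neg_apply, neg_smul, Finset.sum_neg_distrib, hGsum, neg_zero]
        · simp [hGi₁]; linarith
      · exact main G hGout hGsum ⟨i₁, i₁.2, by rw [hGi₁]; exact hpos⟩

lemma isClosed_cone_gen {ι E : Type*} [Fintype ι] [DecidableEq ι]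
    [NormedAddCommGroup E] [NormedSpace ℝ E] (v : ι → E) :
    IsClosed {x : E | ∃ l : ι → ℝ, (∀ i, 0 ≤ l i) ∧ ∑ i, l i • v i = x} := by
  have hset : {x : E | ∃ l : ι → ℝ, (∀ i, 0 ≤ l i) ∧ ∑ i, l i • v i = x} =
      ⋃ t : Finset ι, {x : E | LinearIndependent ℝ (fun i : t => v i) ∧
        ∃ m : ι → ℝ, (∀ i, 0 ≤ m i) ∧ ∑ i ∈ t, m i • v i = x} := by
    ext x
    simp only [Set.mem_setOf_eq, Set.mem_iUnion]
    constructor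
    · rintro ⟨l, hl, rfl⟩
      obtain ⟨t, _, hind, m, hm, hsum⟩ := cone_cara v Finset.univ l hl
      exact ⟨t, hind, m, hm, by rw [hsum]⟩
    · rintro ⟨t, hind, m, hm, rfl⟩
      refine ⟨fun i => if i ∈ t then m i else 0,
        fun i => by by_cases h : i ∈ t <;> simp [h, hm i], ?_⟩
      rw [← Finset.sum_subset (Finset.subset_univ t)
        (fun i _ hi => by simp [hi])]
      exact Finset.sum_congr rfl fun i hi => by simp [hi]
  rw [hset]
  apply isClosed_iUnion_of_finite
  intro t
  by_cases hind : LinearIndependent ℝ (fun i : t => v i)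
  · have himg : {x : E | LinearIndependent ℝ (fun i : t => v i) ∧
        ∃ m : ι → ℝ, (∀ i, 0 ≤ m i) ∧ ∑ i ∈ t, m i • v i = x} =
        (Fintype.linearCombination ℝ (fun i : t => v i)) ''
          {c : t → ℝ | ∀ i, 0 ≤ c i} := by
      ext x
      simp only [Set.mem_setOf_eq, Set.mem_image, Fintype.linearCombination_apply]
      constructor
      · rintro ⟨-, m, hm, rfl⟩
        exact ⟨fun i => m i, fun i => hm i, by rw [Finset.sum_coe_sort t (fun i => m i • v i)]⟩
      · rintro ⟨c, hc, rfl⟩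
        refine ⟨hind, fun i => if h : i ∈ t then c ⟨i, h⟩ else 0,
          fun i => by by_cases h : i ∈ t <;> simp [h, hc], ?_⟩
        rw [← Finset.sum_coe_sort t]
        exact Finset.sum_congr rfl fun i _ => by simp [i.2]
    rw [himg]
    have hker : LinearMap.ker (Fintype.linearCombination ℝ (fun i : t => v i)) = ⊥ := by
      rw [LinearMap.ker_eq_bot']
      intro c hc
      rw [Fintype.linearCombination_apply] at hc
      funext i
      exact Fintype.linearIndependent_iff.mp hind c hc i
    have hce := LinearMap.isClosedEmbedding_of_injective hker
    refine hce.isClosedMap _ ?_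
    have : {c : t → ℝ | ∀ i, 0 ≤ c i} = ⋂ i : t, {c : t → ℝ | 0 ≤ c i} := by
      ext c; simp
    rw [this]
    exact isClosed_iInter fun i => isClosed_le continuous_const (continuous_apply i)
  · convert isClosed_empty
    ext x
    simp [hind]

lemma farkas_row {m n : ℕ} (M : Matrix (Fin m) (Fin n) ℝ) (b : Fin m → ℝ)
    (c : Fin n → ℝ) (t : ℝ) (x₀ : Fin n → ℝ) (hx₀ : M.mulVec x₀ ≤ b)
    (h : ∀ x, M.mulVec x ≤ b → c ⬝ᵥ x ≤ t) :
    ∃ y : Fin m → ℝ, (∀ i, 0 ≤ y i) ∧ M.transpose.mulVec y = c ∧ y ⬝ᵥ b ≤ t := by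
  classical
  set w : Option (Fin m) → (Fin (n+1) → ℝ) :=
    fun i => Option.elim i (Fin.cons 1 0) (fun i => Fin.cons (b i) (M i)) with hw
  set S : Set (Fin (n+1) → ℝ) :=
    {x | ∃ l : Option (Fin m) → ℝ, (∀ i, 0 ≤ l i) ∧ ∑ i, l i • w i = x} with hS
  have hSclosed : IsClosed S := isClosed_cone_gen w
  have hwmem : ∀ i, w i ∈ S := by
    intro i
    refine ⟨fun j => if j = i then 1 else 0, fun j => by positivity, ?_⟩
    simp [ite_smul]
  -- main claim: Fin.cons t c ∈ S
  have main : Fin.cons t c ∈ S := by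
    by_contra hmem
    set φ := EuclideanSpace.equiv (Fin (n+1)) ℝ with hφ
    set K : ConvexCone ℝ (EuclideanSpace ℝ (Fin (n+1))) :=
      { carrier := φ ⁻¹' S
        smul_mem' := by
          rintro a ha x ⟨l, hl, hsum⟩
          exact ⟨fun i => a * l i, fun i => mul_nonneg ha.le (hl i), by
            simp only [_root_.map_smul, ← hsum, Finset.smul_sum, smul_smul]⟩
        add_mem' := by
          rintro x ⟨l, hl, hlsum⟩ z ⟨l', hl', hl'sum⟩
          exact ⟨fun i => l i + l' i, fun i => add_nonneg (hl i) (hl' i), by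
            simp only [_root_.map_add, ← hlsum, ← hl'sum, add_smul, Finset.sum_add_distrib]⟩ }
    have hKne : (K : Set (EuclideanSpace ℝ (Fin (n+1)))).Nonempty :=
      ⟨0, ⟨fun _ => 0, fun _ => le_refl 0, by simp⟩⟩
    have hKcl : IsClosed (K : Set (EuclideanSpace ℝ (Fin (n+1)))) :=
      hSclosed.preimage φ.continuous
    have hdisj : φ.symm (Fin.cons t c) ∉ K := by
      intro hmem'
      exact hmem (by simpa using (show φ (φ.symm (Fin.cons t c)) ∈ S from hmem'))
    obtain ⟨y, hyK, hyb⟩ :=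
      ProperCone.hyperplane_separation' (C := ({
          carrier := (K : Set _)
          add_mem' := fun hx hy => K.add_mem hx hy
          zero_mem' := (show (0 : EuclideanSpace ℝ (Fin (n+1))) ∈ K from
            ⟨fun _ => 0, fun _ => le_refl 0, by simp⟩)
          smul_mem' := fun c x hx => by
            show (c : ℝ) • x ∈ K
            rcases c.2.eq_or_lt with h | h
            · rw [← h, zero_smul]; exact ⟨fun _ => 0, fun _ => le_refl 0, by simp⟩
            · exact K.smul_mem h hx
          isClosed' := hKcl } : ProperCone ℝ (EuclideanSpace ℝ (Fin (n+1))))) hdisj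
    set Y : Fin (n+1) → ℝ := φ y with hY
    have hinner : ∀ u ∈ S, 0 ≤ ∑ k, u k * Y k := by
      intro u hu
      have h1 := hyK (φ.symm u) (show φ (φ.symm u) ∈ S by simpa using hu)
      rw [PiLp.inner_apply] at h1
      have h3 : 0 ≤ ∑ x, y.ofLp x * (φ.symm u).ofLp x := by simpa [RCLike.inner_apply] using h1
      exact le_of_le_of_eq h3 (Finset.sum_congr rfl fun k _ => mul_comm _ _)
    set r : ℝ := Y 0 with hr
    set z : Fin n → ℝ := fun j => Y j.succ with hz
    have h_r : 0 ≤ r := by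
      have := hinner (w none) (hwmem none)
      simpa [hw, Fin.sum_univ_succ] using this
    have h_gen : ∀ i, 0 ≤ b i * r + M i ⬝ᵥ z := by
      intro i
      have := hinner (w (some i)) (hwmem (some i))
      simpa [hw, Fin.sum_univ_succ, dotProduct, hz] using this
    have h_neg : r * t + c ⬝ᵥ z < 0 := by
      rw [PiLp.inner_apply] at hyb
      have : ∑ k, Y k * (Fin.cons t c : Fin (n+1) → ℝ) k < 0 := by
        have h3 := hyb
        simp [RCLike.inner_apply] at h3
        exact h3
      calc r * t + c ⬝ᵥ z
          = ∑ k, Y k * (Fin.cons t c : Fin (n+1) → ℝ) k := by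
            simp [Fin.sum_univ_succ, dotProduct, hz, hr, mul_comm]
        _ < 0 := this
    rcases eq_or_lt_of_le h_r with hr0 | hr0
    · -- r = 0
      have hMz : ∀ i, 0 ≤ M i ⬝ᵥ z := fun i => by have := h_gen i; rw [← hr0] at this; linarith
      have hcz : c ⬝ᵥ z < 0 := by rw [← hr0] at h_neg; linarith
      have hx₀t : c ⬝ᵥ x₀ ≤ t := h x₀ hx₀
      have hczpos : 0 < -(c ⬝ᵥ z) := by linarith
      set s : ℝ := (t + 1 - c ⬝ᵥ x₀) / (-(c ⬝ᵥ z)) with hsdef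
      have hs : 0 ≤ s := div_nonneg (by linarith) hczpos.le
      have hfeas : M.mulVec (x₀ - s • z) ≤ b := by
        intro i
        have : M.mulVec (x₀ - s • z) i = M i ⬝ᵥ x₀ - s * (M i ⬝ᵥ z) := by
          simp [Matrix.mulVec_sub, Matrix.mulVec_smul, Matrix.mulVec]
        rw [this]
        have := hx₀ i
        have h2 : 0 ≤ s * (M i ⬝ᵥ z) := mul_nonneg hs (hMz i)
        simp only [Matrix.mulVec] at this
        linarith
      have := h _ hfeas
      have hcx : c ⬝ᵥ (x₀ - s • z) = c ⬝ᵥ x₀ + (t + 1 - c ⬝ᵥ x₀) := by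
        rw [dotProduct_sub, dotProduct_smul]
        have : s * (-(c ⬝ᵥ z)) = t + 1 - c ⬝ᵥ x₀ := div_mul_cancel₀ _ hczpos.ne'
        simp only [smul_eq_mul]
        linarith
      rw [hcx] at this
      linarith
    · -- r > 0
      have hfeas : M.mulVec ((-r⁻¹) • z) ≤ b := by
        intro i
        have heq : M.mulVec ((-r⁻¹) • z) i = (-r⁻¹) * (M i ⬝ᵥ z) := by
          simp [Matrix.mulVec_smul, Matrix.mulVec]
        rw [heq]
        have h3 : -(M i ⬝ᵥ z) ≤ b i * r := by linarith [h_gen i]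
        calc (-r⁻¹) * (M i ⬝ᵥ z) = -(M i ⬝ᵥ z) * r⁻¹ := by ring
          _ ≤ (b i * r) * r⁻¹ := mul_le_mul_of_nonneg_right h3 (inv_nonneg.2 hr0.le)
          _ = b i * (r * r⁻¹) := by ring
          _ = b i := by rw [mul_inv_cancel₀ hr0.ne', mul_one]
      have hle := h _ hfeas
      have heq : c ⬝ᵥ ((-r⁻¹) • z) = (-r⁻¹) * (c ⬝ᵥ z) := by
        rw [dotProduct_smul]; simp
      rw [heq] at hle
      have h5 := mul_le_mul_of_nonneg_left hle hr0.le
      have hrne : r ≠ 0 := hr0.ne'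
      have h6 : r * (-r⁻¹ * (c ⬝ᵥ z)) = -(c ⬝ᵥ z) := by field_simp
      rw [h6] at h5
      linarith
  -- extract the dual certificate
  obtain ⟨l, hl, hsum⟩ := main
  refine ⟨fun i => l (some i), fun i => hl (some i), ?_, ?_⟩
  · funext j
    have hc := congrFun hsum j.succ
    rw [Finset.sum_apply] at hc
    simp only [Pi.smul_apply, smul_eq_mul] at hc
    rw [Fintype.sum_option] at hc
    simp only [hw, Option.elim, Fin.cons_succ, Pi.zero_apply, mul_zero, zero_add] at hc
    rw [Matrix.mulVec, dotProduct, ← hc]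
    exact Finset.sum_congr rfl fun i _ => by rw [Matrix.transpose_apply, mul_comm]
  · have hc := congrFun hsum 0
    rw [Finset.sum_apply] at hc
    simp only [Pi.smul_apply, smul_eq_mul] at hc
    rw [Fintype.sum_option] at hc
    simp only [hw, Option.elim, Fin.cons_zero, mul_one] at hc
    rw [dotProduct]
    linarith [hl none, hc]


/-- Polytope containment extension of Farkas' lemma (Lemma 2 of the paper):
for a nonempty bounded polytope `B = {x | H_B x ≤ h_B}` and polyhedron
`A = {x | H_A x ≤ h_A}`, we have `T B + d ⊆ A` iff there is an entrywise
nonnegative matrix `Λ` with `Λ H_B = H_A T` and `Λ h_B ≤ h_A - H_A d`. -/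
theorem stmt0 {nA nB mA mB : ℕ}
    (HA : Matrix (Fin mA) (Fin nA) ℝ) (hA : Fin mA → ℝ)
    (HB : Matrix (Fin mB) (Fin nB) ℝ) (hB : Fin mB → ℝ)
    (T : Matrix (Fin nA) (Fin nB) ℝ) (d : Fin nA → ℝ)
    (Bset : Set (Fin nB → ℝ)) (hBset : Bset = {x | HB.mulVec x ≤ hB})
    (hne : Bset.Nonempty) (hbdd : Bornology.IsBounded Bset) :
    ((fun x => T.mulVec x + d) '' Bset ⊆ {x | HA.mulVec x ≤ hA}) ↔
      ∃ Λ : Matrix (Fin mA) (Fin mB) ℝ,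
        (∀ i j, 0 ≤ Λ i j) ∧ Λ * HB = HA * T ∧ Λ.mulVec hB ≤ hA - HA.mulVec d := by
  obtain ⟨x₀, hx₀⟩ := hne
  rw [hBset] at hx₀
  constructor
  · intro h
    have key : ∀ i : Fin mA, ∃ y : Fin mB → ℝ, (∀ k, 0 ≤ y k) ∧
        HB.transpose.mulVec y = (HA * T) i ∧ y ⬝ᵥ hB ≤ hA i - HA.mulVec d i := by
      intro i
      apply farkas_row HB hB ((HA * T) i) (hA i - HA.mulVec d i) x₀ hx₀
      intro x hx
      have hmem : T.mulVec x + d ∈ {x | HA.mulVec x ≤ hA} :=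
        h ⟨x, by rw [hBset]; exact hx, rfl⟩
      have hle := hmem i
      rw [Matrix.mulVec_add, Matrix.mulVec_mulVec] at hle
      have : ((HA * T).mulVec x) i = (HA * T) i ⬝ᵥ x := rfl
      simp only [Pi.add_apply] at hle
      rw [this] at hle
      linarith
    choose y hy0 hyT hyb using key
    refine ⟨Matrix.of y, fun i j => hy0 i j, ?_, ?_⟩
    · ext i j
      have := congrFun (hyT i) j
      rw [Matrix.mulVec, dotProduct] at this
      rw [Matrix.mul_apply, ← this]
      exact Finset.sum_congr rfl fun k _ => by rw [Matrix.transpose_apply, mul_comm]; rfl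
    · intro i
      have := hyb i
      simp only [Pi.sub_apply]
      exact this
  · rintro ⟨Λ, hΛ0, hΛHB, hΛhB⟩ v ⟨x, hx, rfl⟩
    rw [hBset] at hx
    intro i
    have hmono : (Λ.mulVec (HB.mulVec x)) i ≤ (Λ.mulVec hB) i := by
      rw [Matrix.mulVec, Matrix.mulVec, dotProduct, dotProduct]
      exact Finset.sum_le_sum fun k _ => mul_le_mul_of_nonneg_left (hx k) (hΛ0 i k)
    have heq : HA.mulVec (T.mulVec x + d) i
        = (Λ.mulVec (HB.mulVec x)) i + (HA.mulVec d) i := by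
      rw [Matrix.mulVec_add, Matrix.mulVec_mulVec, Matrix.mulVec_mulVec, ← hΛHB]
      rfl
    rw [heq]
    have := hΛhB i
    simp only [Pi.sub_apply] at this
    linarith
end

section
/- Consider a rooted tree with node set $\mathcal{V}$, root $v_0$, parent map $\mathrm{child} : \mathcal{V}\setminus\{v_0\} \to \mathcal{V}$, a nonnegative cost $\mathcal{C} : \mathcal{V} \to \mathbb{R}_{\ge 0}$, and value function defined recursively by $V(v_0) = 0$ and $V(v) = \mathcal{C}(v) + V(\mathrm{child}(v))$. Suppose for each node $v$ there is a polytope $\mathbb{X}_v \subseteq \mathbb{R}^n$ and a control law $\mu_v : \mathbb{X}_v \to \mathbb{U}$ such that for all $x \in \mathbb{X}_v$ ($v \neq v_0$): $F(x, \mu_v(x)) \in \mathbb{X}_{\mathrm{child}(v)}$ and the stage cost satisfies $\gamma(x, \mu_v(x)) \le \mathcal{C}(v)$. Then for any $x_0 \in \mathbb{X}_{v}$ with $v$ at depth $d$ from the root, the closed-loop trajectory $x_{t+1} = F(x_t, \mu_{v_t}(x_t))$ (where $v_t$ is the node at depth $d-t$ along the path from $v$ to $v_0$) satisfies $x_d \in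 \mathbb{X}_{v_0}$ and $\sum_{t=0}^{d-1} \gamma(x_t, \mu_{v_t}(x_t)) \le V(v)$. -/
/-- Theorem 2 of the paper: along the tree, starting from any `x₀` in the
polytope of a node `v` at depth `dep` from the root, the closed-loop trajectory
generated by the node controllers reaches the root (goal) polytope in `dep`
steps, with accumulated stage cost bounded by the cost-to-go `V v`. -/
theorem stmt13 {n : ℕ} {U : Type*} (Vn : Type*) (v0 : Vn) (child : Vn → Vn)
    (C : Vn → ℝ) (hC : ∀ v, 0 ≤ C v)
    (Val : Vn → ℝ) (hVal0 : Val v0 = 0)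
    (hVal : ∀ v, v ≠ v0 → Val v = C v + Val (child v))
    (Xv : Vn → Set (Fin n → ℝ)) (μ : Vn → (Fin n → ℝ) → U)
    (F : (Fin n → ℝ) → U → (Fin n → ℝ)) (γ : (Fin n → ℝ) → U → ℝ)
    (hγ : ∀ x u, 0 ≤ γ x u)
    (hstep : ∀ v, v ≠ v0 → ∀ x ∈ Xv v,
      F x (μ v x) ∈ Xv (child v) ∧ γ x (μ v x) ≤ C v)
    (v : Vn) (dep : ℕ) (hdepth : child^[dep] v = v0)
    (hpath : ∀ t, t < dep → child^[t] v ≠ v0)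
    (x : ℕ → Fin n → ℝ) (hx0 : x 0 ∈ Xv v)
    (hxstep : ∀ t, t < dep → x (t + 1) = F (x t) (μ (child^[t] v) (x t))) :
    x dep ∈ Xv v0 ∧
      ∑ t ∈ Finset.range dep, γ (x t) (μ (child^[t] v) (x t)) ≤ Val v := by
  induction dep generalizing v x with
  | zero =>
    simp at hdepth
    subst hdepth
    simpa [hVal0] using hx0
  | succ d ih =>
    have hv : v ≠ v0 := by simpa using hpath 0 (Nat.succ_pos d)
    obtain ⟨hmem, hcost⟩ := hstep v hv (x 0) hx0
    have hx1 : x 1 = F (x 0) (μ v (x 0)) := by simpa using hxstep 0 (Nat.succ_pos d)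
    have hx1mem : x 1 ∈ Xv (child v) := hx1 ▸ hmem
    have hiter : ∀ t, child^[t] (child v) = child^[t+1] v := by
      intro t; rw [← Function.iterate_succ_apply]
    have hdep' : child^[d] (child v) = v0 := by rw [hiter]; exact hdepth
    have hpath' : ∀ t, t < d → child^[t] (child v) ≠ v0 := by
      intro t ht; rw [hiter]; exact hpath (t+1) (by omega)
    have hxstep' : ∀ t, t < d → (fun s => x (s+1)) (t + 1)
        = F ((fun s => x (s+1)) t) (μ (child^[t] (child v)) ((fun s => x (s+1)) t)) := by
      intro t ht
      simp only [hiter]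
      exact hxstep (t+1) (by omega)
    obtain ⟨hgoal, hsum⟩ := ih (child v) hdep' hpath' (fun s => x (s+1)) hx1mem hxstep'
    constructor
    · exact hgoal
    · rw [Finset.sum_range_succ', hVal v hv]
      simp only [Function.iterate_zero_apply]
      simp only [hiter] at hsum
      linarith [hsum]
end
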